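/- Let 𝔤 be a finite-dimensional simple Lie algebra over ℂ equipped with a nondegenerate invariant symmetric bilinear form B. Let x ∈ 𝔤 be such that ad x is diagonalizable with all eigenvalues in ½ℤ, and let f ∈ 𝔤 satisfy [x,f] = -f. Assume that every eigenvalue of ad x on the centralizer 𝔤^f = {v ∈ 𝔤 : [f,v] = 0} is ≤ 0, and that B(x,v) = 0 for every v ∈ 𝔤^f with [x,v] = 0. Then (𝔤,x,f) is a Dynkin datum: there exists e ∈ 𝔤 such that [x,e] = e and [e,f] = 2x, i.e. (e, 2x, f) is an sl(2)-triple with x = h/2. -/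

import Mathlib

/-- If `𝔤` is a finite-dimensional simple complex Lie algebra with a nondegenerate
invariant symmetric bilinear form `B`, `ad x` is diagonalizable with eigenvalues in
`½ℤ`, `[x,f] = -f`, all eigenvalues of `ad x` on the centralizer `𝔤^f` are `≤ 0`, and
`x` is `B`-orthogonal to every `v ∈ 𝔤^f` with `[x,v] = 0`, then `(𝔤,x,f)` is a Dynkin
datum: there is `e` with `[x,e] = e` and `[e,f] = 2x`. -/
theorem dynkin_datum_of_orthogonal_to_centralizer
    (L : Type) [LieRing L] [LieAlgebra ℂ L] [FiniteDimensional ℂ L]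
    [LieAlgebra.IsSimple ℂ L]
    (B : L →ₗ[ℂ] L →ₗ[ℂ] ℂ)
    (hBsymm : ∀ a b : L, B a b = B b a)
    (hBinv : ∀ a b c : L, B ⁅a, b⁆ c = B a ⁅b, c⁆)
    (hBnd : ∀ a : L, (∀ b : L, B a b = 0) → a = 0)
    (x f : L)
    (hdiag : (⨆ μ : ℂ, Module.End.eigenspace (LieAlgebra.ad ℂ L x) μ) = ⊤)
    (hhalf : ∀ μ : ℂ, Module.End.HasEigenvalue (LieAlgebra.ad ℂ L x) μ →
        ∃ n : ℤ, μ = (n : ℂ) / 2)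
    (hxf : ⁅x, f⁆ = -f)
    (hnonpos : ∀ (μ : ℂ) (v : L), v ≠ 0 → ⁅f, v⁆ = 0 → ⁅x, v⁆ = μ • v →
        ∃ r : ℝ, r ≤ 0 ∧ μ = (r : ℂ))
    (horth : ∀ v : L, ⁅f, v⁆ = 0 → ⁅x, v⁆ = 0 → B x v = 0) :
    ∃ e : L, ⁅x, e⁆ = e ∧ ⁅e, f⁆ = (2 : ℂ) • x := by
  classical
  set E : ℂ → Submodule ℂ L := fun μ => Module.End.eigenspace (LieAlgebra.ad ℂ L x) μ with hE
  -- membership criterion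
  have hmem : ∀ (μ : ℂ) (v : L), v ∈ E μ ↔ ⁅x, v⁆ = μ • v := by
    intro μ v
    rw [hE, Module.End.mem_eigenspace_iff, LieAlgebra.ad_apply]
  -- `ad x` is skew with respect to `B`
  have hskew : ∀ a b : L, B ⁅x, a⁆ b = -B a ⁅x, b⁆ := by
    intro a b
    have h1 : B ⁅a, x⁆ b = B a ⁅x, b⁆ := hBinv a x b
    rw [show (⁅a, x⁆ : L) = -⁅x, a⁆ by rw [← lie_skew a x]] at h1
    rw [map_neg, LinearMap.neg_apply] at h1
    linear_combination -h1
  -- `B` pairs eigenspaces for opposite eigenvalues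
  have hpair : ∀ (μ ν : ℂ), μ + ν ≠ 0 → ∀ a ∈ E μ, ∀ b ∈ E ν, B a b = 0 := by
    intro μ ν hμν a ha b hb
    have ha' := (hmem μ a).mp ha
    have hb' := (hmem ν b).mp hb
    have h := hskew a b
    rw [ha', hb'] at h
    simp only [map_smul, LinearMap.smul_apply, smul_eq_mul] at h
    have : (μ + ν) * B a b = 0 := by ring_nf; ring_nf at h; linear_combination h
    rcases mul_eq_zero.mp this with h' | h'
    · exact absurd h' hμν
    · exact h'
  -- `⁅f, ·⁆` lowers the eigenvalue by 1
  have hfE : ∀ (μ : ℂ), ∀ w ∈ E μ, ⁅f, w⁆ ∈ E (μ - 1) := by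
    intro μ w hw
    rw [hmem] at hw ⊢
    have : (⁅x, ⁅f, w⁆⁆ : L) = ⁅⁅x, f⁆, w⁆ + ⁅f, ⁅x, w⁆⁆ := by rw [leibniz_lie]
    rw [hxf, hw] at this
    rw [this, sub_smul, one_smul]
    simp [sub_eq_add_neg, add_comm]
  -- nondegeneracy of the pairing between opposite eigenspaces
  have hnd : ∀ (ν : ℂ), ∀ w ∈ E ν, (∀ u ∈ E (-ν), B u w = 0) → w = 0 := by
    intro ν w hw hu
    apply hBnd w
    intro b
    rw [hBsymm]
    have hb : b ∈ ⨆ μ : ℂ, E μ := by rw [hdiag]; trivial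
    refine Submodule.iSup_induction (motive := fun b => B b w = 0) E hb ?_ (by simp) ?_
    · intro μ a ha
      by_cases hμ : μ + ν = 0
      · have hμ' : μ = -ν := eq_neg_of_add_eq_zero_left hμ
        exact hu a (hμ' ▸ ha)
      · exact hpair μ ν hμ a ha w hw
    · intro a b ha hb
      simp [map_add, ha, hb]
  -- x is in the zero eigenspace
  have hxE0 : x ∈ E 0 := by rw [hmem]; simp
  -- the complement: sum of nonzero eigenspaces
  set N : Submodule ℂ L := ⨆ μ : {μ : ℂ // μ ≠ 0}, E μ with hN
  have hcodis : Codisjoint (E 0) N := by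
    rw [codisjoint_iff, eq_top_iff, ← hdiag]
    refine iSup_le fun μ => ?_
    by_cases hμ : μ = 0
    · exact hμ ▸ le_sup_left
    · exact le_trans (le_iSup (fun μ' : {μ : ℂ // μ ≠ 0} => E μ') ⟨μ, hμ⟩) le_sup_right
  -- B x w = 0 for w in N
  have hxN : ∀ w ∈ N, B x w = 0 := by
    intro w hw
    refine Submodule.iSup_induction (motive := fun w => B x w = 0)
      (fun μ : {μ : ℂ // μ ≠ 0} => E μ) hw ?_ (by simp) ?_
    · intro μ a ha
      exact hpair 0 μ (by simpa using μ.2) x hxE0 a ha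
    · intro a b ha hb
      simp [map_add, ha, hb]
  -- B u ⁅f,w⁆ = 0 for u ∈ E 1, w ∈ N
  have hN1 : ∀ u ∈ E 1, ∀ w ∈ N, B u ⁅f, w⁆ = 0 := by
    intro u hu w hw
    refine Submodule.iSup_induction (motive := fun w => B u ⁅f, w⁆ = 0)
      (fun μ : {μ : ℂ // μ ≠ 0} => E μ) hw ?_ (by simp) ?_
    · intro μ a ha
      have hfa : ⁅f, a⁆ ∈ E ((μ : ℂ) - 1) := hfE μ a ha
      refine hpair 1 ((μ : ℂ) - 1) ?_ u hu _ hfa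
      intro h
      exact μ.2 (by linear_combination h)
    · intro a b ha hb
      simp only [lie_add, map_add, ha, hb, add_zero]
  -- key claim: if B u ⁅f,v⁆ = 0 for all u ∈ E 1, then B x v = 0
  have key : ∀ v : L, (∀ u ∈ E 1, B u ⁅f, v⁆ = 0) → B x v = 0 := by
    intro v hv
    obtain ⟨v₀, v', hv₀, hv', rfl⟩ := Submodule.codisjoint_iff_exists_add_eq.mp hcodis v
    have hfv₀ : (⁅f, v₀⁆ : L) = 0 := by
      refine hnd (-1) ⁅f, v₀⁆ (by simpa using hfE 0 v₀ hv₀) ?_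
      intro u hu
      have hu1 : u ∈ E 1 := by simpa using hu
      have h1 : B u ⁅f, v₀ + v'⁆ = 0 := hv u hu1
      rw [lie_add, map_add] at h1
      rw [hN1 u hu1 v' hv', add_zero] at h1
      exact h1
    have hxv₀ : (⁅x, v₀⁆ : L) = 0 := by rw [(hmem 0 v₀).mp hv₀, zero_smul]
    have h₀ : B x v₀ = 0 := horth v₀ hfv₀ hxv₀
    rw [map_add, h₀, hxN v' hv', add_zero]
  -- now use nondegeneracy + duality to conclude x ∈ ⁅E 1, f⁆
  set T : L →ₗ[ℂ] L := -(LieAlgebra.ad ℂ L f) with hT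
  set W : Submodule ℂ L := Submodule.map T (E 1) with hW
  have hxW : x ∈ W := by
    by_contra hx
    obtain ⟨g, hgx, hgW⟩ := Submodule.exists_dual_map_eq_bot_of_notMem hx inferInstance
    have hBnd' : LinearMap.BilinForm.Nondegenerate B :=
      ⟨hBnd, fun a ha => hBnd a fun b => by rw [hBsymm]; exact ha b⟩
    set v : L := (LinearMap.BilinForm.toDual B hBnd').symm g with hv
    have hBv : ∀ a : L, B v a = g a := by
      intro a
      exact LinearMap.BilinForm.apply_toDual_symm_apply (B := B) (hB := hBnd') g a
    have hgW' : ∀ w ∈ W, g w = 0 := by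
      intro w hw
      have : g w ∈ Submodule.map g W := Submodule.mem_map_of_mem hw
      rw [hgW] at this
      simpa using this
    have hx0 : B x v = 0 := by
      refine key v ?_
      intro u hu
      have h1 : B u ⁅f, v⁆ = B ⁅u, f⁆ v := (hBinv u f v).symm
      have h2 : B ⁅u, f⁆ v = B v ⁅u, f⁆ := hBsymm _ _
      have h3 : (⁅u, f⁆ : L) = T u := by
        rw [hT]; simp only [LinearMap.neg_apply, LieAlgebra.ad_apply]
        exact (lie_skew u f).symm
      have h4 : T u ∈ W := Submodule.mem_map_of_mem hu
      rw [h1, h2, hBv, h3, hgW' _ h4]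
    rw [hBsymm, hBv] at hx0
    exact hgx hx0
  obtain ⟨u, hu, hux⟩ := hxW
  have hux' : (⁅u, f⁆ : L) = x := by
    rw [← hux, hT]; simp only [LinearMap.neg_apply, LieAlgebra.ad_apply]
    exact (lie_skew u f).symm
  refine ⟨(2 : ℂ) • u, ?_, ?_⟩
  · rw [lie_smul, (hmem 1 u).mp hu, one_smul]
  · rw [smul_lie, hux']
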